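/- For probabilities p1, p2, p3 ∈ (0,1) with q_i = 1 - p_i, the condition ((1 - p1*q2)*(1 - p3) - sqrt((1 - p1*q2)^2*(1 - p3)^2 - 4*p2*q1*q2*q3*(1 - p3))) / (2*p2*q3) = 1 holds if and only if (1 + q1)*q2 ≥ 1. -/

import Mathlib

/-- For probabilities `p1, p2, p3 ∈ (0,1)` with `qᵢ = 1 - pᵢ`, the
Knudsen–Hein consistency condition `S(1) = 1` holds iff `(1 + q1) * q2 ≥ 1`. -/
theorem knudsen_hein_S_one_iff
    (p1 p2 p3 q1 q2 q3 : ℝ)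
    (hp1 : p1 ∈ Set.Ioo (0:ℝ) 1) (hp2 : p2 ∈ Set.Ioo (0:ℝ) 1) (hp3 : p3 ∈ Set.Ioo (0:ℝ) 1)
    (hq1 : q1 = 1 - p1) (hq2 : q2 = 1 - p2) (hq3 : q3 = 1 - p3) :
    ((1 - p1*q2) * (1 - p3)
        - Real.sqrt ((1 - p1*q2)^2 * (1 - p3)^2 - 4*p2*q1*q2*q3*(1 - p3)))
      / (2*p2*q3) = 1
    ↔ (1 + q1) * q2 ≥ 1 := by
  obtain ⟨hp1l, hp1u⟩ := hp1
  obtain ⟨hp2l, hp2u⟩ := hp2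
  obtain ⟨hp3l, hp3u⟩ := hp3
  subst hq1 hq2 hq3
  have hq3pos : (0:ℝ) < 1 - p3 := by linarith
  have hp2ne : p2 ≠ 0 := ne_of_gt hp2l
  have hq3ne : (1 - p3) ≠ 0 := ne_of_gt hq3pos
  set t : ℝ := (1 - p1) * (1 - p2) - p2 with ht
  have hdisc : (1 - p1*(1-p2))^2 * (1 - p3)^2 - 4*p2*(1-p1)*(1-p2)*(1-p3)*(1 - p3)
      = (t * (1 - p3))^2 := by rw [ht]; ring
  rw [hdisc, Real.sqrt_sq_eq_abs, abs_mul, abs_of_pos hq3pos]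
  constructor
  · intro h
    have h' : (1 - p1*(1-p2)) * (1-p3) - |t| * (1-p3) = 2*p2*(1-p3) := by
      field_simp at h
      linear_combination (1 - p3) * h
    have habs : |t| = t := by
      have : |t| = (1 - p1*(1-p2)) - 2*p2 := by
        have := mul_right_cancel₀ hq3ne (by linarith : ((1 - p1*(1-p2)) - |t|) * (1-p3) = (2*p2) * (1-p3))
        linarith
      rw [this, ht]; ring
    have ht0 : 0 ≤ t := habs ▸ abs_nonneg t
    rw [ht] at ht0
    nlinarith
  · intro h
    have ht0 : 0 ≤ t := by rw [ht]; nlinarith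
    rw [abs_of_nonneg ht0, ht]
    field_simp
    ring
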